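/- Let k ≥ 2 be an integer and λ ∈ [−1/(k−1), 1]. Then the input-restricted KL contraction coefficient of the Potts channel at the uniform input satisfies η_KL(PC_λ, π) := sup{ D(PC_λ∘P || π) / D(P || π) : P a probability distribution on [k], P ≠ π } = sup_{x∈(1/k,1]} ψ(λx + (1−λ)/k)/ψ(x). -/

import Mathlib

open scoped BigOperators
open Real Set Filter Topology

/-- `ψ(x) = log k + x log x + (1-x) log((1-x)/(k-1))`. -/
noncomputable def psi (k : ℕ) (x : ℝ) : ℝ :=
  Real.log (k : ℝ) + x * Real.log x + (1 - x) * Real.log ((1 - x) / ((k : ℝ) - 1))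

/-- The Potts channel `PC_λ` acting on a distribution on `[k]`. -/
noncomputable def pottsChannel (k : ℕ) (lam : ℝ) (P : Fin k → ℝ) : Fin k → ℝ :=
  fun y => lam * P y + (1 - lam) / (k : ℝ)

/-- KL divergence `D(P‖π)` where `π` is uniform on `[k]`. -/
noncomputable def klUnif (k : ℕ) (P : Fin k → ℝ) : ℝ :=
  ∑ i, P i * Real.log (P i / (1 / (k : ℝ)))

namespace PottsAux

noncomputable def phi (k : ℕ) (p : ℝ) : ℝ := p * Real.log p + p * Real.log k

variable {k : ℕ}

lemma kR_pos (hk : 2 ≤ k) : (0:ℝ) < (k:ℝ) := by exact_mod_cast Nat.pos_of_ne_zero (by omega)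
lemma kR1_pos (hk : 2 ≤ k) : (0:ℝ) < (k:ℝ) - 1 := by
  have : (2:ℝ) ≤ (k:ℝ) := by exact_mod_cast hk
  linarith

lemma phi_term (hk : 2 ≤ k) (p : ℝ) :
    p * Real.log (p / (1 / (k : ℝ))) = phi k p := by
  have hkne : (k:ℝ) ≠ 0 := ne_of_gt (kR_pos hk)
  rcases eq_or_ne p 0 with h | h
  · simp [h, phi]
  · rw [show p / (1 / (k:ℝ)) = p * k by field_simp, Real.log_mul h hkne, phi]; ring

lemma klUnif_eq_sum_phi (hk : 2 ≤ k) (P : Fin k → ℝ) :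
    klUnif k P = ∑ i, phi k (P i) := by
  unfold klUnif
  exact Finset.sum_congr rfl fun i _ => phi_term hk (P i)

lemma phi_ge (hk : 2 ≤ k) {p : ℝ} (hp : 0 ≤ p) : p - 1/(k:ℝ) ≤ phi k p := by
  have hkpos := kR_pos hk
  rcases eq_or_lt_of_le hp with h | h
  · rw [← h]
    simp only [phi, Real.log_zero, mul_zero, zero_mul, add_zero, zero_sub, neg_le, neg_zero]
    positivity
  · have hpk : 0 < p * k := by positivity
    have h1 : Real.log (1 / (p*k)) ≤ 1/(p*k) - 1 := Real.log_le_sub_one_of_pos (by positivity)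
    rw [Real.log_div one_ne_zero (ne_of_gt hpk), Real.log_one] at h1
    have h2 : 1 - 1/(p*k) ≤ Real.log (p*k) := by linarith
    have h3 : p * (1 - 1/(p*k)) ≤ p * Real.log (p*k) := by
      exact mul_le_mul_of_nonneg_left h2 hp
    have h4 : p * (1 - 1/(p*k)) = p - 1/k := by field_simp
    have h5 : p * Real.log (p*k) = phi k p := by
      rw [Real.log_mul (ne_of_gt h) (ne_of_gt hkpos), phi]; ring
    linarith
lemma phi_gt (hk : 2 ≤ k) {p : ℝ} (hp : 0 ≤ p) (hne : p ≠ 1/(k:ℝ)) :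
    p - 1/(k:ℝ) < phi k p := by
  have hkpos := kR_pos hk
  rcases eq_or_lt_of_le hp with h | h
  · have : phi k 0 = 0 := by simp [phi]
    rw [← h, this]
    simp only [zero_sub, neg_lt, neg_zero]
    positivity
  · have hpk : 0 < p * k := by positivity
    have hpk1 : p * k ≠ 1 := by
      intro hcon
      apply hne
      field_simp
      linarith [hcon]
    have h1 : Real.log (1 / (p*k)) < 1/(p*k) - 1 := by
      apply Real.log_lt_sub_one_of_pos (by positivity)
      intro hcon
      apply hpk1
      field_simp at hcon
      linarith [hcon]
    rw [Real.log_div one_ne_zero (ne_of_gt hpk), Real.log_one] at h1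
    have h2 : 1 - 1/(p*k) < Real.log (p*k) := by linarith
    have h3 : p * (1 - 1/(p*k)) < p * Real.log (p*k) := by
      exact mul_lt_mul_of_pos_left h2 h
    have h4 : p * (1 - 1/(p*k)) = p - 1/k := by field_simp
    have h5 : p * Real.log (p*k) = phi k p := by
      rw [Real.log_mul (ne_of_gt h) (ne_of_gt hkpos), phi]; ring
    linarith

lemma sum_sub_inv (hk : 2 ≤ k) {P : Fin k → ℝ} (hsum : ∑ i, P i = 1) :
    ∑ i, (P i - 1/(k:ℝ)) = 0 := by
  have hkne : (k:ℝ) ≠ 0 := ne_of_gt (kR_pos hk)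
  rw [Finset.sum_sub_distrib, hsum, Finset.sum_const, Finset.card_univ, Fintype.card_fin,
    nsmul_eq_mul]
  field_simp
  ring

lemma klUnif_nonneg (hk : 2 ≤ k) {P : Fin k → ℝ} (hP : P ∈ stdSimplex ℝ (Fin k)) :
    0 ≤ klUnif k P := by
  rw [klUnif_eq_sum_phi hk]
  calc (0:ℝ) = ∑ i, (P i - 1/(k:ℝ)) := (sum_sub_inv hk hP.2).symm
  _ ≤ ∑ i, phi k (P i) := Finset.sum_le_sum fun i _ => phi_ge hk (hP.1 i)

lemma klUnif_pos (hk : 2 ≤ k) {P : Fin k → ℝ} (hP : P ∈ stdSimplex ℝ (Fin k))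
    (hne : P ≠ fun _ => 1 / (k : ℝ)) : 0 < klUnif k P := by
  obtain ⟨i0, hi0⟩ : ∃ i, P i ≠ 1/(k:ℝ) := by
    by_contra hcon
    push_neg at hcon
    exact hne (funext hcon)
  rw [klUnif_eq_sum_phi hk]
  calc (0:ℝ) = ∑ i, (P i - 1/(k:ℝ)) := (sum_sub_inv hk hP.2).symm
  _ < ∑ i, phi k (P i) := by
      apply Finset.sum_lt_sum (fun i _ => phi_ge hk (hP.1 i))
      exact ⟨i0, Finset.mem_univ i0, phi_gt hk (hP.1 i0) hi0⟩

lemma sum_two_val (hk : 2 ≤ k) (f : Fin k → ℝ) (i₀ : Fin k) (a b : ℝ)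
    (h0 : f i₀ = a) (h1 : ∀ j, j ≠ i₀ → f j = b) :
    ∑ i, f i = a + ((k:ℝ) - 1) * b := by
  rw [← Finset.sum_erase_add _ _ (Finset.mem_univ i₀), h0]
  have : ∑ j ∈ Finset.univ.erase i₀, f j = ((k:ℝ)-1) * b := by
    rw [Finset.sum_congr rfl (fun j hj => h1 j (Finset.ne_of_mem_erase hj))]
    rw [Finset.sum_const, Finset.card_erase_of_mem (Finset.mem_univ i₀), Finset.card_univ,
      Fintype.card_fin, nsmul_eq_mul]
    have : ((k - 1 : ℕ) : ℝ) = (k:ℝ) - 1 := by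
      have : 1 ≤ k := by omega
      push_cast [this]
      ring
    rw [this]
  rw [this]; ring

lemma klUnif_two_val (hk : 2 ≤ k) (P : Fin k → ℝ) (i₀ : Fin k) (x : ℝ)
    (h0 : P i₀ = x) (h1 : ∀ j, j ≠ i₀ → P j = (1 - x)/((k:ℝ)-1)) :
    klUnif k P = psi k x := by
  have hk1 : ((k:ℝ) - 1) ≠ 0 := ne_of_gt (kR1_pos hk)
  rw [klUnif_eq_sum_phi hk]
  rw [sum_two_val hk _ i₀ (phi k x) (phi k ((1-x)/((k:ℝ)-1)))
    (by rw [h0]) (fun j hj => by rw [h1 j hj])]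
  unfold phi psi
  have hexp : ((k:ℝ)-1) * ((1-x)/((k:ℝ)-1)) = 1 - x := by field_simp
  have : ((k:ℝ)-1) * ((1-x)/((k:ℝ)-1) * Real.log ((1-x)/((k:ℝ)-1)) + (1-x)/((k:ℝ)-1) * Real.log k)
      = (1-x) * Real.log ((1-x)/((k:ℝ)-1)) + (1-x) * Real.log k := by
    rw [mul_add, ← mul_assoc, ← mul_assoc, hexp]
  rw [this]
  ring
lemma phi_convexOn (hk : 2 ≤ k) : ConvexOn ℝ (Set.Ici (0:ℝ)) (phi k) := by
  have h1 : ConvexOn ℝ (Set.Ici (0:ℝ)) (fun p : ℝ => p * Real.log p) := Real.convexOn_mul_log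
  have h2 : ConvexOn ℝ (Set.Ici (0:ℝ)) (fun p : ℝ => p * Real.log k) := by
    refine ⟨convex_Ici 0, fun x _ y _ a b _ _ _ => le_of_eq ?_⟩
    simp only [smul_eq_mul]
    ring
  exact h1.add h2

lemma phi_inv_k (hk : 2 ≤ k) : phi k (1/(k:ℝ)) = 0 := by
  have hkpos := kR_pos hk
  unfold phi
  rw [Real.log_div one_ne_zero (ne_of_gt hkpos), Real.log_one]
  ring

lemma weights_nonneg (hk : 2 ≤ k) {lam : ℝ}
    (hlam : lam ∈ Set.Icc (-(1 / ((k : ℝ) - 1))) 1) :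
    0 ≤ (1-lam)/(k:ℝ) ∧ 0 ≤ (1-lam)/(k:ℝ) + lam := by
  have hkpos := kR_pos hk
  have hk1 := kR1_pos hk
  obtain ⟨hl, hu⟩ := hlam
  constructor
  · apply div_nonneg (by linarith) (le_of_lt hkpos)
  · have h1 : -(1 / ((k:ℝ)-1)) * ((k:ℝ)-1) ≤ lam * ((k:ℝ)-1) :=
      mul_le_mul_of_nonneg_right hl (le_of_lt hk1)
    have h2 : -(1 / ((k:ℝ)-1)) * ((k:ℝ)-1) = -1 := by field_simp
    rw [h2] at h1
    rw [div_add' _ _ _ (ne_of_gt hkpos)]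
    apply div_nonneg _ (le_of_lt hkpos)
    nlinarith

/-- Data processing inequality for the Potts channel at uniform. -/
lemma dpi (hk : 2 ≤ k) {lam : ℝ} (hlam : lam ∈ Set.Icc (-(1 / ((k : ℝ) - 1))) 1)
    {P : Fin k → ℝ} (hP : P ∈ stdSimplex ℝ (Fin k)) :
    klUnif k (pottsChannel k lam P) ≤ klUnif k P := by
  obtain ⟨hc, hcl⟩ := weights_nonneg hk hlam
  have hkpos := kR_pos hk
  set c := (1-lam)/(k:ℝ) with hcdef
  have hsumw : ∀ y : Fin k, ∑ x, (c + if x = y then lam else 0) = 1 := by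
    intro y
    rw [Finset.sum_add_distrib, Finset.sum_const, Finset.card_univ, Fintype.card_fin,
      nsmul_eq_mul, Fintype.sum_ite_eq' y (fun _ => lam), hcdef]
    field_simp
    ring
  have key : ∀ y : Fin k, phi k (lam * P y + c) ≤ ∑ x, (c + if x = y then lam else 0) * phi k (P x) := by
    intro y
    have hz : ∀ x ∈ Finset.univ, P x ∈ Set.Ici (0:ℝ) := fun x _ => hP.1 x
    have hw : ∀ x ∈ Finset.univ, 0 ≤ (c + if x = y then lam else 0) := by
      intro x _
      by_cases h : x = y <;> simp [h, hc, hcl]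
    have := (phi_convexOn hk).map_sum_le hw (hsumw y) hz
    have harg : ∑ x, (c + if x = y then lam else 0) • P x = lam * P y + c := by
      simp only [smul_eq_mul, add_mul]
      rw [Finset.sum_add_distrib]
      have e1 : ∑ x, c * P x = c := by
        rw [← Finset.mul_sum, hP.2, mul_one]
      have e2 : ∑ x, (if x = y then lam else 0) * P x = lam * P y := by
        simp [ite_mul]
      rw [e1, e2]
      ring
    rw [harg] at this
    exact this
  rw [klUnif_eq_sum_phi hk, klUnif_eq_sum_phi hk]
  unfold pottsChannel
  calc ∑ y, phi k (lam * P y + c) ≤ ∑ y, ∑ x, (c + if x = y then lam else 0) * phi k (P x) :=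
        Finset.sum_le_sum (fun y _ => key y)
  _ = ∑ x, (∑ y, (c + if x = y then lam else 0)) * phi k (P x) := by
      rw [Finset.sum_comm]
      exact Finset.sum_congr rfl fun x _ => by rw [Finset.sum_mul]
  _ = ∑ x, phi k (P x) := by
      refine Finset.sum_congr rfl fun x _ => ?_
      have : ∑ y, (c + if x = y then lam else 0) = 1 := by
        rw [Finset.sum_add_distrib, Finset.sum_const, Finset.card_univ, Fintype.card_fin,
          nsmul_eq_mul, Fintype.sum_ite_eq x (fun _ => lam), hcdef]
        field_simp
        ring
      rw [this, one_mul]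

/-- For `lam ∈ [0,1]`, per-coordinate convexity bound. -/
lemma contraction_lam (hk : 2 ≤ k) {lam : ℝ} (hl0 : 0 ≤ lam) (hl1 : lam ≤ 1)
    {P : Fin k → ℝ} (hP : P ∈ stdSimplex ℝ (Fin k)) :
    klUnif k (pottsChannel k lam P) ≤ lam * klUnif k P := by
  have hkpos := kR_pos hk
  rw [klUnif_eq_sum_phi hk, klUnif_eq_sum_phi hk, Finset.mul_sum]
  apply Finset.sum_le_sum
  intro i _
  have hmem : (1:ℝ)/(k:ℝ) ∈ Set.Ici (0:ℝ) := by
    simp only [Set.mem_Ici]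
    positivity
  have := (phi_convexOn hk).2 (Set.mem_Ici.mpr (hP.1 i)) hmem hl0 (by linarith : (0:ℝ) ≤ 1 - lam)
    (by ring)
  simp only [smul_eq_mul] at this
  have harg : lam * P i + (1-lam) * (1/(k:ℝ)) = lam * P i + (1-lam)/(k:ℝ) := by ring
  rw [harg, phi_inv_k hk, mul_zero, add_zero] at this
  unfold pottsChannel
  exact this
noncomputable def qdist (k : ℕ) (x : ℝ) : Fin k → ℝ :=
  fun i => if (i:ℕ) = 0 then x else (1-x)/((k:ℝ)-1)

lemma qdist_apply_zero (hk : 2 ≤ k) (x : ℝ) :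
    qdist k x ⟨0, by omega⟩ = x := by simp [qdist]

lemma qdist_apply_ne (hk : 2 ≤ k) (x : ℝ) {j : Fin k} (hj : j ≠ ⟨0, by omega⟩) :
    qdist k x j = (1-x)/((k:ℝ)-1) := by
  have : (j:ℕ) ≠ 0 := by
    intro h
    exact hj (Fin.ext h)
  simp [qdist, this]

lemma qdist_sum (hk : 2 ≤ k) (x : ℝ) : ∑ i, qdist k x i = 1 := by
  rw [sum_two_val hk _ ⟨0, by omega⟩ x ((1-x)/((k:ℝ)-1)) (qdist_apply_zero hk x)
    (fun j hj => qdist_apply_ne hk x hj)]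
  have := kR1_pos hk
  field_simp
  ring

lemma qdist_mem (hk : 2 ≤ k) {x : ℝ} (hx : x ∈ Set.Icc (0:ℝ) 1) :
    qdist k x ∈ stdSimplex ℝ (Fin k) := by
  refine ⟨fun i => ?_, qdist_sum hk x⟩
  unfold qdist
  split
  · exact hx.1
  · apply div_nonneg (by linarith [hx.2]) (le_of_lt (kR1_pos hk))

lemma klUnif_qdist (hk : 2 ≤ k) (x : ℝ) : klUnif k (qdist k x) = psi k x :=
  klUnif_two_val hk _ ⟨0, by omega⟩ x (qdist_apply_zero hk x)
    (fun j hj => qdist_apply_ne hk x hj)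

lemma potts_qdist (hk : 2 ≤ k) (lam x : ℝ) :
    pottsChannel k lam (qdist k x) = qdist k (lam * x + (1-lam)/(k:ℝ)) := by
  have hkne : (k:ℝ) ≠ 0 := ne_of_gt (kR_pos hk)
  have hk1ne : (k:ℝ) - 1 ≠ 0 := ne_of_gt (kR1_pos hk)
  funext i
  unfold pottsChannel qdist
  split
  · rfl
  · field_simp
    ring

lemma psi_one (hk : 2 ≤ k) : psi k 1 = Real.log k := by
  unfold psi
  simp

lemma psi_nonneg (hk : 2 ≤ k) {x : ℝ} (hx : x ∈ Set.Icc (0:ℝ) 1) : 0 ≤ psi k x := by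
  rw [← klUnif_qdist hk]
  exact klUnif_nonneg hk (qdist_mem hk hx)

lemma qdist_ne_unif (hk : 2 ≤ k) {x : ℝ} (hne : x ≠ 1/(k:ℝ)) :
    qdist k x ≠ fun _ => 1/(k:ℝ) := by
  intro h
  apply hne
  have := congrFun h ⟨0, by omega⟩
  rwa [qdist_apply_zero hk x] at this

lemma psi_pos (hk : 2 ≤ k) {x : ℝ} (hx : x ∈ Set.Icc (0:ℝ) 1) (hne : x ≠ 1/(k:ℝ)) :
    0 < psi k x := by
  rw [← klUnif_qdist hk]
  exact klUnif_pos hk (qdist_mem hk hx) (qdist_ne_unif hk hne)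

lemma out_mem (hk : 2 ≤ k) {lam : ℝ} (hlam : lam ∈ Set.Icc (-(1 / ((k : ℝ) - 1))) 1)
    {x : ℝ} (hx : x ∈ Set.Icc (0:ℝ) 1) :
    lam * x + (1-lam)/(k:ℝ) ∈ Set.Icc (0:ℝ) 1 := by
  have hkpos := kR_pos hk
  have hk1 := kR1_pos hk
  obtain ⟨hl, hu⟩ := hlam
  obtain ⟨hx0, hx1⟩ := hx
  have hlk : -1 ≤ lam * ((k:ℝ)-1) := by
    have := mul_le_mul_of_nonneg_right hl (le_of_lt hk1)
    have h2 : -(1 / ((k:ℝ)-1)) * ((k:ℝ)-1) = -1 := by field_simp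
    linarith [h2 ▸ this]
  constructor
  · rcases le_or_gt 0 lam with h | h
    · have : 0 ≤ lam * x := mul_nonneg h hx0
      have : 0 ≤ (1-lam)/(k:ℝ) := div_nonneg (by linarith) (le_of_lt hkpos)
      linarith
    · have h1 : lam ≤ lam * x := by nlinarith
      have h2 : 0 ≤ lam + (1-lam)/(k:ℝ) := by
        have e : lam + (1-lam)/(k:ℝ) = (lam*((k:ℝ)-1) + 1)/(k:ℝ) := by field_simp; ring
        rw [e]
        exact div_nonneg (by linarith) (le_of_lt hkpos)
      have h3 : (1-lam)/(k:ℝ) + lam ≤ lam * x + (1-lam)/(k:ℝ) := by linarith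
      linarith
  · rcases le_or_gt 0 lam with h | h
    · have h1 : lam * x ≤ lam := by nlinarith
      have h2 : lam + (1-lam)/(k:ℝ) ≤ 1 := by
        have e : lam + (1-lam)/(k:ℝ) = (lam*((k:ℝ)-1) + 1)/(k:ℝ) := by field_simp; ring
        rw [e, div_le_one hkpos]
        nlinarith
      linarith
    · have h1 : lam * x ≤ 0 := mul_nonpos_of_nonpos_of_nonneg (le_of_lt h) hx0
      have h2 : (1-lam)/(k:ℝ) ≤ 1 := by
        rw [div_le_one hkpos]
        by_contra hcon
        push_neg at hcon
        have hc2 : lam < 1 - (k:ℝ) := by linarith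
        have hge : (1:ℝ) ≤ (k:ℝ)-1 := by
          have : (2:ℝ) ≤ (k:ℝ) := by exact_mod_cast hk
          linarith
        have := mul_lt_mul_of_pos_right hc2 hk1
        nlinarith
      linarith

/-- The right-hand side set. -/
def Bset (k : ℕ) (lam : ℝ) : Set ℝ :=
  {r : ℝ | ∃ x ∈ Set.Ioc (1 / (k:ℝ)) 1, r = psi k (lam * x + (1 - lam) / (k:ℝ)) / psi k x}

noncomputable def rstar (k : ℕ) (lam : ℝ) : ℝ := sSup (Bset k lam)

lemma inv_k_lt_one (hk : 2 ≤ k) : 1/(k:ℝ) < 1 := by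
  rw [div_lt_one (kR_pos hk)]
  exact_mod_cast by omega

lemma Ioc_sub (hk : 2 ≤ k) {x : ℝ} (hx : x ∈ Set.Ioc (1/(k:ℝ)) 1) :
    x ∈ Set.Icc (0:ℝ) 1 ∧ x ≠ 1/(k:ℝ) := by
  have h0 : 0 < 1/(k:ℝ) := by positivity
  exact ⟨⟨by linarith [hx.1], hx.2⟩, ne_of_gt hx.1⟩

lemma B_nonempty (hk : 2 ≤ k) (lam : ℝ) : (Bset k lam).Nonempty :=
  ⟨_, 1, ⟨inv_k_lt_one hk, le_refl 1⟩, rfl⟩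

lemma B_le_one (hk : 2 ≤ k) {lam : ℝ} (hlam : lam ∈ Set.Icc (-(1 / ((k : ℝ) - 1))) 1) :
    ∀ b ∈ Bset k lam, b ≤ 1 := by
  rintro b ⟨x, hx, rfl⟩
  obtain ⟨hxI, hxne⟩ := Ioc_sub hk hx
  rw [div_le_one (psi_pos hk hxI hxne)]
  rw [← klUnif_qdist hk, ← klUnif_qdist hk, ← potts_qdist hk]
  exact dpi hk hlam (qdist_mem hk hxI)

lemma B_bddAbove (hk : 2 ≤ k) {lam : ℝ} (hlam : lam ∈ Set.Icc (-(1 / ((k : ℝ) - 1))) 1) :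
    BddAbove (Bset k lam) := ⟨1, B_le_one hk hlam⟩

lemma mem_le_rstar (hk : 2 ≤ k) {lam : ℝ} (hlam : lam ∈ Set.Icc (-(1 / ((k : ℝ) - 1))) 1)
    {b : ℝ} (hb : b ∈ Bset k lam) : b ≤ rstar k lam :=
  le_csSup (B_bddAbove hk hlam) hb

lemma rstar_nonneg (hk : 2 ≤ k) {lam : ℝ} (hlam : lam ∈ Set.Icc (-(1 / ((k : ℝ) - 1))) 1) :
    0 ≤ rstar k lam := by
  have hmem : psi k (lam * 1 + (1-lam)/(k:ℝ)) / psi k 1 ∈ Bset k lam :=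
    ⟨1, ⟨inv_k_lt_one hk, le_refl 1⟩, rfl⟩
  have h1 : 0 ≤ psi k (lam * 1 + (1-lam)/(k:ℝ)) / psi k 1 := by
    apply div_nonneg
    · exact psi_nonneg hk (out_mem hk hlam ⟨zero_le_one, le_refl 1⟩)
    · rw [psi_one hk]
      exact Real.log_nonneg (by exact_mod_cast by omega)
  exact le_trans h1 (mem_le_rstar hk hlam hmem)

lemma out_one_ne (hk : 2 ≤ k) {lam : ℝ} (hne : lam ≠ 0) :
    lam * 1 + (1-lam)/(k:ℝ) ≠ 1/(k:ℝ) := by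
  have hkne : (k:ℝ) ≠ 0 := ne_of_gt (kR_pos hk)
  have hk1 : (0:ℝ) < (k:ℝ) - 1 := kR1_pos hk
  intro h
  apply hne
  have h2 : (lam * 1 + (1-lam)/(k:ℝ)) * (k:ℝ) = (1/(k:ℝ)) * (k:ℝ) := by rw [h]
  field_simp at h2
  have h3 : lam * ((k:ℝ)-1) = 0 := by linarith
  rcases mul_eq_zero.mp h3 with h4 | h4
  · exact h4
  · exact absurd h4 (ne_of_gt hk1)

lemma rstar_pos (hk : 2 ≤ k) {lam : ℝ} (hlam : lam ∈ Set.Icc (-(1 / ((k : ℝ) - 1))) 1)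
    (hne : lam ≠ 0) : 0 < rstar k lam := by
  have hmem : psi k (lam * 1 + (1-lam)/(k:ℝ)) / psi k 1 ∈ Bset k lam :=
    ⟨1, ⟨inv_k_lt_one hk, le_refl 1⟩, rfl⟩
  have h1 : 0 < psi k (lam * 1 + (1-lam)/(k:ℝ)) / psi k 1 := by
    apply div_pos
    · exact psi_pos hk (out_mem hk hlam ⟨zero_le_one, le_refl 1⟩) (out_one_ne hk hne)
    · rw [psi_one hk]
      exact Real.log_pos (by exact_mod_cast by omega)
  exact lt_of_lt_of_le h1 (mem_le_rstar hk hlam hmem)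

lemma rstar_le_lam (hk : 2 ≤ k) {lam : ℝ} (h0 : 0 ≤ lam) (h1 : lam ≤ 1) :
    rstar k lam ≤ lam := by
  apply csSup_le (B_nonempty hk lam)
  rintro b ⟨x, hx, rfl⟩
  obtain ⟨hxI, hxne⟩ := Ioc_sub hk hx
  rw [div_le_iff₀ (psi_pos hk hxI hxne)]
  have h2 := contraction_lam hk h0 h1 (qdist_mem hk hxI)
  rw [potts_qdist hk, klUnif_qdist hk, klUnif_qdist hk] at h2
  exact h2
/-! ### Calculus infrastructure for the extremal argument -/

noncomputable def wfun (k : ℕ) (lam r c : ℝ) : ℝ → ℝ :=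
  fun p => phi k (lam*p + c) - r * phi k p

noncomputable def dw (k : ℕ) (lam r c : ℝ) (p : ℝ) : ℝ :=
  lam * Real.log (lam*p+c) - r * Real.log p + (lam - r) * (1 + Real.log k)

noncomputable def gfun (lam r c : ℝ) : ℝ → ℝ :=
  fun p => lam * Real.log (lam*p+c) - r * Real.log p

noncomputable def gd (lam r c : ℝ) (p : ℝ) : ℝ := lam * ((lam*p+c)⁻¹ * lam) - r * p⁻¹

open Classical in
noncomputable def p0 (lam r c : ℝ) : ℝ :=
  if lam * (lam - r) = 0 then 2 else r*c/(lam*(lam-r))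

variable {lam r c : ℝ}

lemma hasDerivAt_affine (p : ℝ) : HasDerivAt (fun t : ℝ => lam*t + c) lam p := by
  simpa using ((hasDerivAt_id p).const_mul lam).add_const c

lemma hasDerivAt_wfun {k : ℕ} {p : ℝ} (hp : p ≠ 0) (hq : lam*p+c ≠ 0) :
    HasDerivAt (wfun k lam r c) (dw k lam r c p) p := by
  have h1 := hasDerivAt_affine (lam := lam) (c := c) p
  have h2 : HasDerivAt (fun t : ℝ => (lam*t+c) * Real.log (lam*t+c))
      ((Real.log (lam*p+c) + 1) * lam) p := by
    have := (Real.hasDerivAt_mul_log hq).comp p h1; exact this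
  have h3 : HasDerivAt (fun t : ℝ => (lam*t+c) * Real.log k) (lam * Real.log k) p := by
    simpa using h1.mul_const (Real.log (k:ℝ))
  have h4 : HasDerivAt (fun t : ℝ => t * Real.log t) (Real.log p + 1) p :=
    Real.hasDerivAt_mul_log hp
  have h5 : HasDerivAt (fun t : ℝ => t * Real.log k) (Real.log k) p := by
    simpa using (hasDerivAt_id p).mul_const (Real.log (k:ℝ))
  have H := (h2.add h3).sub ((h4.add h5).const_mul r)
  have heq : (fun t : ℝ => ((lam*t+c) * Real.log (lam*t+c) + (lam*t+c) * Real.log k)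
      - r * (t * Real.log t + t * Real.log k)) = wfun k lam r c := by
    funext t
    simp only [wfun, phi]
  have H : HasDerivAt (wfun k lam r c) ((Real.log (lam*p+c) + 1) * lam + lam * Real.log k
      - r * (Real.log p + 1 + Real.log k)) p := by rw [← heq]; exact H
  convert H using 1
  unfold dw
  ring

lemma hasDerivAt_gfun {p : ℝ} (hp : p ≠ 0) (hq : lam*p+c ≠ 0) :
    HasDerivAt (gfun lam r c) (gd lam r c p) p := by
  have h1 := hasDerivAt_affine (lam := lam) (c := c) p
  have h2 : HasDerivAt (fun t : ℝ => Real.log (lam*t+c)) ((lam*p+c)⁻¹ * lam) p :=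
    by have := (Real.hasDerivAt_log hq).comp p h1; exact this
  exact (h2.const_mul lam).sub ((Real.hasDerivAt_log hp).const_mul r)

lemma gd_eq {p : ℝ} (hp : p ≠ 0) (hq : lam*p+c ≠ 0) :
    gd lam r c p = (lam*(lam-r)*p - r*c)/(p*(lam*p+c)) := by
  unfold gd
  field_simp
  ring

lemma gd_neg (hc : 0 < c) (hr : 0 < r) (hA : 0 ≤ lam * (lam - r))
    {p : ℝ} (hp0 : 0 < p) (hq : 0 < lam*p+c) (hlt : p < p0 lam r c) :
    gd lam r c p < 0 := by
  rw [gd_eq (ne_of_gt hp0) (ne_of_gt hq)]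
  apply div_neg_of_neg_of_pos _ (by positivity)
  by_cases hA0 : lam * (lam - r) = 0
  · rw [hA0]
    nlinarith [mul_pos hr hc]
  · have hApos : 0 < lam*(lam-r) := lt_of_le_of_ne hA (Ne.symm hA0)
    unfold p0 at hlt
    rw [if_neg hA0] at hlt
    have := (lt_div_iff₀ hApos).mp hlt
    nlinarith

lemma gd_pos (hc : 0 < c) (hr : 0 < r) (hA : 0 ≤ lam * (lam - r))
    {p : ℝ} (hp0 : 0 < p) (hp1 : p < 1) (hq : 0 < lam*p+c) (hlt : p0 lam r c < p) :
    0 < gd lam r c p := by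
  rw [gd_eq (ne_of_gt hp0) (ne_of_gt hq)]
  apply div_pos _ (by positivity)
  by_cases hA0 : lam * (lam - r) = 0
  · exfalso
    unfold p0 at hlt
    rw [if_pos hA0] at hlt
    linarith
  · have hApos : 0 < lam*(lam-r) := lt_of_le_of_ne hA (Ne.symm hA0)
    unfold p0 at hlt
    rw [if_neg hA0] at hlt
    have := (div_lt_iff₀ hApos).mp hlt
    nlinarith

lemma g_mono (hc : 0 < c) (hr : 0 < r) (hA : 0 ≤ lam * (lam - r))
    (hlamc : ∀ q : ℝ, 0 < q → q < 1 → 0 < lam*q+c)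
    {a b : ℝ} (h0 : 0 < a) (hab : a < b) (hb1 : b < 1) (hpa : p0 lam r c ≤ a) :
    gfun lam r c a < gfun lam r c b := by
  have hmono : StrictMonoOn (gfun lam r c) (Set.Icc a b) := by
    apply strictMonoOn_of_deriv_pos (convex_Icc a b)
    · intro q hq
      have hq0 : 0 < q := lt_of_lt_of_le h0 hq.1
      have hq1 : q < 1 := lt_of_le_of_lt hq.2 hb1
      exact ((hasDerivAt_gfun (ne_of_gt hq0) (ne_of_gt (hlamc q hq0 hq1))).continuousAt).continuousWithinAt
    · intro q hq
      rw [interior_Icc] at hq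
      have hq0 : 0 < q := lt_trans h0 hq.1
      have hq1 : q < 1 := lt_trans hq.2 hb1
      rw [(hasDerivAt_gfun (ne_of_gt hq0) (ne_of_gt (hlamc q hq0 hq1))).deriv]
      exact gd_pos hc hr hA hq0 hq1 (hlamc q hq0 hq1) (lt_of_le_of_lt hpa hq.1)
  exact hmono (Set.left_mem_Icc.mpr (le_of_lt hab)) (Set.right_mem_Icc.mpr (le_of_lt hab)) hab

lemma g_anti (hc : 0 < c) (hr : 0 < r) (hA : 0 ≤ lam * (lam - r))
    (hlamc : ∀ q : ℝ, 0 < q → q < 1 → 0 < lam*q+c)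
    {a b : ℝ} (h0 : 0 < a) (hab : a < b) (hb1 : b < 1) (hpb : b ≤ p0 lam r c) :
    gfun lam r c b < gfun lam r c a := by
  have hmono : StrictAntiOn (gfun lam r c) (Set.Icc a b) := by
    apply strictAntiOn_of_deriv_neg (convex_Icc a b)
    · intro q hq
      have hq0 : 0 < q := lt_of_lt_of_le h0 hq.1
      have hq1 : q < 1 := lt_of_le_of_lt hq.2 hb1
      exact ((hasDerivAt_gfun (ne_of_gt hq0) (ne_of_gt (hlamc q hq0 hq1))).continuousAt).continuousWithinAt
    · intro q hq
      rw [interior_Icc] at hq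
      have hq0 : 0 < q := lt_trans h0 hq.1
      have hq1 : q < 1 := lt_trans hq.2 hb1
      rw [(hasDerivAt_gfun (ne_of_gt hq0) (ne_of_gt (hlamc q hq0 hq1))).deriv]
      exact gd_neg hc hr hA hq0 (hlamc q hq0 hq1) (lt_of_lt_of_le hq.2 hpb)
  exact hmono (Set.left_mem_Icc.mpr (le_of_lt hab)) (Set.right_mem_Icc.mpr (le_of_lt hab)) hab

lemma g_pairing (hc : 0 < c) (hr : 0 < r) (hA : 0 ≤ lam * (lam - r))
    (hlamc : ∀ q : ℝ, 0 < q → q < 1 → 0 < lam*q+c)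
    {a b : ℝ} (hb0 : 0 < b) (hba : b < a) (ha1 : a < 1)
    (heq : gfun lam r c b = gfun lam r c a) :
    b < p0 lam r c ∧ p0 lam r c < a := by
  constructor
  · by_contra hcon
    push_neg at hcon
    exact absurd heq (ne_of_lt (g_mono hc hr hA hlamc hb0 hba ha1 hcon))
  · by_contra hcon
    push_neg at hcon
    exact absurd heq.symm (ne_of_lt (g_anti hc hr hA hlamc hb0 hba ha1 hcon))

/-! ### Perturbation of two coordinates -/

def pert {k : ℕ} (P : Fin k → ℝ) (i j : Fin k) (t : ℝ) : Fin k → ℝ :=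
  fun m => if m = i then P i + t else if m = j then P j - t else P m

variable {k : ℕ} {P : Fin k → ℝ} {i j : Fin k} {t : ℝ}

lemma pert_sum (hij : i ≠ j) : ∑ m, pert P i j t m = ∑ m, P m := by
  have heq : ∀ m, pert P i j t m
      = P m + ((if m = i then t else 0) - (if m = j then t else 0)) := by
    intro m
    unfold pert
    by_cases h1 : m = i
    · subst h1
      simp [hij]
    · by_cases h2 : m = j
      · subst h2
        simp [Ne.symm hij]
        ring
      · simp [h1, h2]
  rw [Finset.sum_congr rfl (fun m _ => heq m), Finset.sum_add_distrib,
    Finset.sum_sub_distrib, Fintype.sum_ite_eq' i (fun _ => t),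
    Fintype.sum_ite_eq' j (fun _ => t)]
  ring

lemma pert_mem (hij : i ≠ j) (hP : P ∈ stdSimplex ℝ (Fin k))
    (h1 : 0 ≤ P i + t) (h2 : 0 ≤ P j - t) : pert P i j t ∈ stdSimplex ℝ (Fin k) := by
  refine ⟨fun m => ?_, by rw [pert_sum hij]; exact hP.2⟩
  unfold pert
  by_cases hm1 : m = i
  · rw [if_pos hm1]; exact h1
  · rw [if_neg hm1]
    by_cases hm2 : m = j
    · rw [if_pos hm2]; exact h2
    · rw [if_neg hm2]; exact hP.1 m

lemma sum_pert_w (w : ℝ → ℝ) (hij : i ≠ j) :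
    ∑ m, w (pert P i j t m)
      = (∑ m, w (P m)) - w (P i) - w (P j) + w (P i + t) + w (P j - t) := by
  have hji : j ≠ i := Ne.symm hij
  have hjmem : j ∈ Finset.univ.erase i := Finset.mem_erase.mpr ⟨hji, Finset.mem_univ j⟩
  have E : ∀ (f : Fin k → ℝ), ∑ m, f m = ∑ m ∈ (Finset.univ.erase i).erase j, f m + f j + f i := by
    intro f
    rw [Finset.sum_erase_add _ _ hjmem, Finset.sum_erase_add _ _ (Finset.mem_univ i)]
  rw [E (fun m => w (pert P i j t m)), E (fun m => w (P m))]
  have h1 : ∀ m ∈ (Finset.univ.erase i).erase j, w (pert P i j t m) = w (P m) := by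
    intro m hm
    have hmj := Finset.ne_of_mem_erase hm
    have hmi := Finset.ne_of_mem_erase (Finset.mem_of_mem_erase hm)
    unfold pert
    rw [if_neg hmi, if_neg hmj]
  rw [Finset.sum_congr rfl h1]
  have h2 : pert P i j t j = P j - t := by unfold pert; rw [if_neg hji, if_pos rfl]
  have h3 : pert P i j t i = P i + t := by unfold pert; rw [if_pos rfl]
  rw [h2, h3]
  ring
lemma hasDerivAt_phiaff {k : ℕ} {a b : ℝ} (p : ℝ) (h : a*p+b ≠ 0) :
    HasDerivAt (fun t => phi k (a*t+b)) ((Real.log (a*p+b) + 1) * a + a * Real.log k) p := by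
  have h1 : HasDerivAt (fun t : ℝ => a*t + b) a p := hasDerivAt_affine p
  have h2 : HasDerivAt (fun t : ℝ => (a*t+b) * Real.log (a*t+b))
      ((Real.log (a*p+b) + 1) * a) p := by
    have := (Real.hasDerivAt_mul_log h).comp p h1; exact this
  have h3 : HasDerivAt (fun t : ℝ => (a*t+b) * Real.log k) (a * Real.log k) p :=
    h1.mul_const (Real.log (k:ℝ))
  exact h2.add h3

/-- The key extremal argument: if the `Bset` bound holds for two-valued distributions,
the contraction bound holds for all distributions. -/
lemma main_core (hk : 2 ≤ k) {lam r : ℝ}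
    (hr : 0 < r) (hc : 0 < (1-lam)/(k:ℝ)) (hA : 0 ≤ lam*(lam-r))
    (hlamc : ∀ q : ℝ, 0 < q → q < 1 → 0 < lam*q + (1-lam)/(k:ℝ))
    (hB : ∀ x : ℝ, x ∈ Set.Ioc (1/(k:ℝ)) 1 → psi k (lam*x + (1-lam)/(k:ℝ)) ≤ r * psi k x)
    {P : Fin k → ℝ} (hP : P ∈ stdSimplex ℝ (Fin k)) :
    klUnif k (pottsChannel k lam P) ≤ r * klUnif k P := by
  have hkpos := kR_pos hk
  have hk1 := kR1_pos hk
  set c : ℝ := (1-lam)/(k:ℝ) with hcdef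
  set w : ℝ → ℝ := wfun k lam r c with hwdef
  have hsplit : ∀ R : Fin k → ℝ,
      (∑ m, w (R m)) = klUnif k (pottsChannel k lam R) - r * klUnif k R := by
    intro R
    rw [klUnif_eq_sum_phi hk, klUnif_eq_sum_phi hk, Finset.mul_sum, ← Finset.sum_sub_distrib]
    exact Finset.sum_congr rfl (fun m _ => rfl)
  suffices hGoal : ∀ Q ∈ stdSimplex ℝ (Fin k), (∑ m, w (Q m)) ≤ 0 by
    have h1 := hGoal P hP
    rw [hsplit P] at h1
    linarith
  -- continuity and maximizer
  have hphi_cont : Continuous (phi k) := by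
    unfold phi
    exact Real.continuous_mul_log.add (continuous_id.mul continuous_const)
  have hw_cont : Continuous w := by
    rw [hwdef]
    unfold wfun
    exact (hphi_cont.comp (by continuity)).sub (continuous_const.mul hphi_cont)
  have hG_cont : Continuous (fun Q : Fin k → ℝ => ∑ m, w (Q m)) := by
    apply continuous_finset_sum
    intro m _
    exact hw_cont.comp (continuous_apply m)
  have hunif_mem : (fun _ : Fin k => 1/(k:ℝ)) ∈ stdSimplex ℝ (Fin k) := by
    constructor
    · intro i
      positivity
    · rw [Finset.sum_const, Finset.card_univ, Fintype.card_fin, nsmul_eq_mul]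
      field_simp
  obtain ⟨Q0, hQ0mem, hQ0max⟩ :=
    (isCompact_stdSimplex (𝕜 := ℝ) (ι := Fin k)).exists_isMaxOn ⟨_, hunif_mem⟩ hG_cont.continuousOn
  have hmax : ∀ R ∈ stdSimplex ℝ (Fin k), (∑ m, w (R m)) ≤ ∑ m, w (Q0 m) :=
    fun R hR => hQ0max hR
  suffices hQ00 : (∑ m, w (Q0 m)) ≤ 0 by
    intro R hR
    exact le_trans (hmax R hR) hQ00
  -- basic coordinate facts
  have hle1 : ∀ m, Q0 m ≤ 1 := by
    intro m
    have := Finset.single_le_sum (f := Q0) (fun i _ => hQ0mem.1 i) (Finset.mem_univ m)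
    rwa [hQ0mem.2] at this
  -- bound for two-valued maximizers
  have hGtwo : ∀ (i₀ : Fin k) (x : ℝ), x ∈ Set.Ioc (1/(k:ℝ)) 1 → Q0 i₀ = x →
      (∀ j, j ≠ i₀ → Q0 j = (1-x)/((k:ℝ)-1)) → (∑ m, w (Q0 m)) ≤ 0 := by
    intro i₀ x hx h0 h1
    have hin : klUnif k Q0 = psi k x := klUnif_two_val hk Q0 i₀ x h0 h1
    have hout : klUnif k (pottsChannel k lam Q0) = psi k (lam*x + c) := by
      apply klUnif_two_val hk _ i₀
      · show lam * Q0 i₀ + (1-lam)/(k:ℝ) = lam*x + c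
        rw [h0, hcdef]
      · intro j hj
        show lam * Q0 j + (1-lam)/(k:ℝ) = (1 - (lam*x + c))/((k:ℝ)-1)
        rw [h1 j hj, hcdef]
        field_simp
        ring
    rw [hsplit Q0, hin, hout]
    have := hB x hx
    linarith
  -- case: some coordinate equals 1
  by_cases hone : ∃ i₀, Q0 i₀ = 1
  · obtain ⟨i₀, hi₀⟩ := hone
    have hrest : ∀ j, j ≠ i₀ → Q0 j = 0 := by
      intro j hj
      have h1 : ∑ m ∈ Finset.univ.erase i₀, Q0 m = 0 := by
        have h2 := Finset.sum_erase_add Finset.univ Q0 (Finset.mem_univ i₀)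
        rw [hQ0mem.2, hi₀] at h2
        linarith
      exact (Finset.sum_eq_zero_iff_of_nonneg (fun m _ => hQ0mem.1 m)).mp h1 j
        (Finset.mem_erase.mpr ⟨hj, Finset.mem_univ j⟩)
    apply hGtwo i₀ 1 ⟨inv_k_lt_one hk, le_refl 1⟩ hi₀
    intro j hj
    rw [hrest j hj]
    simp
  -- case: some coordinate equals 0 (impossible at max)
  by_cases hzero : ∃ j, Q0 j = 0
  · exfalso
    obtain ⟨j, hj0⟩ := hzero
    obtain ⟨i, hi⟩ : ∃ i, 1/(k:ℝ) ≤ Q0 i := by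
      by_contra hcon
      push_neg at hcon
      have h1 : ∑ m, Q0 m < ∑ _m : Fin k, 1/(k:ℝ) := by
        apply Finset.sum_lt_sum_of_nonempty
        · exact ⟨⟨0, by omega⟩, Finset.mem_univ _⟩
        · exact fun m _ => hcon m
      rw [hQ0mem.2, Finset.sum_const, Finset.card_univ, Fintype.card_fin, nsmul_eq_mul] at h1
      rw [mul_one_div, div_self (ne_of_gt hkpos)] at h1
      linarith
    have h1k : (0:ℝ) < 1/(k:ℝ) := by positivity
    have hij : i ≠ j := by
      intro h
      rw [h, hj0] at hi
      linarith
    have hi1 : Q0 i < 1 := lt_of_le_of_ne (hle1 i) (fun h => hone ⟨i, h⟩)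
    have hi0 : 0 < Q0 i := lt_of_lt_of_le h1k hi
    have hc0' : lam*(0:ℝ)+c ≠ 0 := by
      rw [mul_zero, zero_add]
      exact ne_of_gt hc
    -- the increment function
    set ξ : ℝ → ℝ := fun t => (w t - w 0) + (w (Q0 i - t) - w (Q0 i)) with hξdef
    have hsum_pert : ∀ t, (∑ m, w (pert Q0 j i t m)) = (∑ m, w (Q0 m)) + ξ t := by
      intro t
      rw [sum_pert_w w (Ne.symm hij), hj0, zero_add, hξdef]
      ring
    -- derivative facts
    have hDminus : HasDerivAt (fun s => w (Q0 i - s)) (dw k lam r c (Q0 i) * (-1)) 0 := by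
      have houter : HasDerivAt w (dw k lam r c (Q0 i)) (Q0 i - 0) := by
        rw [sub_zero]
        exact hasDerivAt_wfun (ne_of_gt hi0) (ne_of_gt (hlamc _ hi0 hi1))
      exact houter.comp 0 ((hasDerivAt_id 0).const_sub (Q0 i))
    have hT1 : Tendsto (slope (fun s => w (Q0 i - s)) 0) (𝓝[>] (0:ℝ))
        (𝓝 (dw k lam r c (Q0 i) * (-1))) :=
      (hasDerivAt_iff_tendsto_slope.mp hDminus).mono_left
        (nhdsWithin_mono _ (fun x hx => ne_of_gt hx))
    have hDout : HasDerivAt (fun t => phi k (lam*t+c))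
        ((Real.log (lam*0+c) + 1) * lam + lam * Real.log k) 0 := hasDerivAt_phiaff 0 hc0'
    have hT2 : Tendsto (slope (fun t => phi k (lam*t+c)) 0) (𝓝[>] (0:ℝ))
        (𝓝 ((Real.log (lam*0+c) + 1) * lam + lam * Real.log k)) :=
      (hasDerivAt_iff_tendsto_slope.mp hDout).mono_left
        (nhdsWithin_mono _ (fun x hx => ne_of_gt hx))
    have hT3 : Tendsto (fun t : ℝ => r * -Real.log t - r * Real.log k) (𝓝[>] (0:ℝ)) atTop := by
      have h1 : Tendsto (fun t : ℝ => -Real.log t) (𝓝[>] (0:ℝ)) atTop :=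
        Filter.tendsto_neg_atBot_atTop.comp Real.tendsto_log_nhdsGT_zero
      have h2 : Tendsto (fun t : ℝ => r * -Real.log t) (𝓝[>] (0:ℝ)) atTop :=
        h1.const_mul_atTop hr
      have h3 := tendsto_atTop_add_const_right (𝓝[>] (0:ℝ)) (-(r * Real.log k)) h2
      simpa [sub_eq_add_neg] using h3
    have hPhi : Tendsto (fun t => ξ t / t) (𝓝[>] (0:ℝ)) atTop := by
      have hcomb := (hT2.add hT1).add_atTop hT3
      apply hcomb.congr'
      filter_upwards [self_mem_nhdsWithin] with t ht
      have htne : t ≠ 0 := ne_of_gt ht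
      rw [hξdef]
      simp only [slope_def_field, sub_zero]
      rw [hwdef]
      unfold wfun phi
      field_simp
      ring
    have hev1 := hPhi.eventually_gt_atTop 0
    have hev2 : Set.Ioo (0:ℝ) (Q0 i) ∈ 𝓝[>] (0:ℝ) :=
      Ioo_mem_nhdsGT_of_mem ⟨le_refl 0, hi0⟩
    obtain ⟨t, hΦpos, ht⟩ := (hev1.and (eventually_of_mem hev2 (fun x hx => hx))).exists
    have htpos : 0 < t := ht.1
    have hξpos : 0 < ξ t := by
      have h1 : ξ t = (ξ t / t) * t := by field_simp
      rw [h1]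
      exact mul_pos hΦpos htpos
    have hpmem : pert Q0 j i t ∈ stdSimplex ℝ (Fin k) := by
      apply pert_mem (Ne.symm hij) hQ0mem
      · rw [hj0, zero_add]
        exact le_of_lt htpos
      · linarith [ht.2]
    have := hmax _ hpmem
    rw [hsum_pert t] at this
    linarith
  -- case: all coordinates in (0,1)
  push_neg at hone hzero
  have hQrange : ∀ m, Q0 m ∈ Set.Ioo (0:ℝ) 1 := fun m =>
    ⟨lt_of_le_of_ne (hQ0mem.1 m) (Ne.symm (hzero m)), lt_of_le_of_ne (hle1 m) (hone m)⟩
  -- derivative of the two-coordinate perturbation function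
  have hFderiv : ∀ (i j : Fin k) (s : ℝ), Q0 i + s ∈ Set.Ioo (0:ℝ) 1 →
      Q0 j - s ∈ Set.Ioo (0:ℝ) 1 →
      HasDerivAt (fun t => (∑ m, w (Q0 m)) - w (Q0 i) - w (Q0 j) + w (Q0 i + t) + w (Q0 j - t))
        (dw k lam r c (Q0 i + s) - dw k lam r c (Q0 j - s)) s := by
    intro i j s his hjs
    have hplus : HasDerivAt (fun t => w (Q0 i + t)) (dw k lam r c (Q0 i + s) * 1) s := by
      have houter : HasDerivAt w (dw k lam r c (Q0 i + s)) (Q0 i + s) :=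
        hasDerivAt_wfun (ne_of_gt his.1) (ne_of_gt (hlamc _ his.1 his.2))
      exact houter.comp s ((hasDerivAt_id s).const_add (Q0 i))
    have hminus : HasDerivAt (fun t => w (Q0 j - t)) (dw k lam r c (Q0 j - s) * (-1)) s := by
      have houter : HasDerivAt w (dw k lam r c (Q0 j - s)) (Q0 j - s) :=
        hasDerivAt_wfun (ne_of_gt hjs.1) (ne_of_gt (hlamc _ hjs.1 hjs.2))
      exact houter.comp s ((hasDerivAt_id s).const_sub (Q0 j))
    have : HasDerivAt (fun t => (∑ m, w (Q0 m)) - w (Q0 i) - w (Q0 j) + w (Q0 i + t) + w (Q0 j - t))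
        (dw k lam r c (Q0 i + s) * 1 + dw k lam r c (Q0 j - s) * (-1)) s :=
      (hplus.const_add ((∑ m, w (Q0 m)) - w (Q0 i) - w (Q0 j))).add hminus
    convert this using 1
    ring
  -- first-order conditions
  have hFOC : ∀ i j : Fin k, gfun lam r c (Q0 i) = gfun lam r c (Q0 j) := by
    intro i j
    rcases eq_or_ne i j with rfl | hij
    · rfl
    have hδ : 0 < min (Q0 i) (Q0 j) := lt_min (hQrange i).1 (hQrange j).1
    have hloc : IsLocalMax
        (fun t => (∑ m, w (Q0 m)) - w (Q0 i) - w (Q0 j) + w (Q0 i + t) + w (Q0 j - t)) 0 := by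
      filter_upwards [Ioo_mem_nhds (by linarith : -(min (Q0 i) (Q0 j)) < 0) hδ] with t ht
      have hmem' : pert Q0 i j t ∈ stdSimplex ℝ (Fin k) := by
        apply pert_mem hij hQ0mem
        · have : -(Q0 i) ≤ -(min (Q0 i) (Q0 j)) := by
            simp only [neg_le_neg_iff]
            exact min_le_left _ _
          linarith [ht.1]
        · have : t < Q0 j := lt_of_lt_of_le ht.2 (min_le_right _ _)
          linarith
      have h2 := hmax _ hmem'
      rw [sum_pert_w w hij] at h2
      calc (∑ m, w (Q0 m)) - w (Q0 i) - w (Q0 j) + w (Q0 i + t) + w (Q0 j - t)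
          ≤ ∑ m, w (Q0 m) := h2
      _ = (∑ m, w (Q0 m)) - w (Q0 i) - w (Q0 j) + w (Q0 i + 0) + w (Q0 j - 0) := by
          rw [add_zero, sub_zero]
          ring
    have hd := hFderiv i j 0 (by rw [add_zero]; exact hQrange i) (by rw [sub_zero]; exact hQrange j)
    have h0 := hloc.hasDerivAt_eq_zero hd
    rw [add_zero, sub_zero] at h0
    have hdw : ∀ p : ℝ, dw k lam r c p = gfun lam r c p + (lam - r)*(1+Real.log k) := by
      intro p
      unfold dw gfun
      ring
    rw [hdw, hdw] at h0
    linarith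
  -- max and min coordinates
  obtain ⟨imax, -, hmax'⟩ := Finset.exists_max_image Finset.univ Q0 ⟨⟨0, by omega⟩, Finset.mem_univ _⟩
  obtain ⟨imin, -, hmin'⟩ := Finset.exists_min_image Finset.univ Q0 ⟨⟨0, by omega⟩, Finset.mem_univ _⟩
  rcases eq_or_lt_of_le (hmin' imax (Finset.mem_univ _)) with heq | hba
  · -- all coordinates equal: uniform, value 0
    have hall : ∀ m, Q0 m = Q0 imin := by
      intro m
      have h1 := hmax' m (Finset.mem_univ m)
      have h2 := hmin' m (Finset.mem_univ m)
      rw [← heq] at h1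
      linarith
    have hval : Q0 imin = 1/(k:ℝ) := by
      have h1 : ∑ m, Q0 m = (k:ℝ) * Q0 imin := by
        rw [Finset.sum_congr rfl (fun m _ => hall m), Finset.sum_const, Finset.card_univ,
          Fintype.card_fin, nsmul_eq_mul]
      rw [hQ0mem.2] at h1
      field_simp
      linarith
    have hwu : w (1/(k:ℝ)) = 0 := by
      rw [hwdef]
      unfold wfun
      have harg : lam * (1/(k:ℝ)) + c = 1/(k:ℝ) := by
        rw [hcdef]
        field_simp
        ring
      rw [harg, phi_inv_k hk]
      ring
    have : ∀ m, w (Q0 m) = 0 := fun m => by rw [hall m, hval, hwu]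
    rw [Finset.sum_congr rfl (fun m _ => this m)]
    simp
  · -- two distinct values
    have hg := hFOC imin imax
    have hpair := g_pairing hc hr hA hlamc (hQrange imin).1 hba (hQrange imax).2 hg
    have htwo : ∀ m, Q0 m = Q0 imax ∨ Q0 m = Q0 imin := by
      intro m
      by_contra hcon
      push_neg at hcon
      obtain ⟨hna, hnb⟩ := hcon
      have hma : Q0 m < Q0 imax := lt_of_le_of_ne (hmax' m (Finset.mem_univ m)) hna
      have hmb : Q0 imin < Q0 m := lt_of_le_of_ne (hmin' m (Finset.mem_univ m)) (Ne.symm hnb)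
      have h1 := g_pairing hc hr hA hlamc (hQrange m).1 hma (hQrange imax).2 (hFOC m imax)
      have h2 := g_pairing hc hr hA hlamc (hQrange imin).1 hmb (hQrange m).2 (hFOC imin m)
      linarith [h1.1, h2.2]
    have huniq : ∀ m, m ≠ imax → Q0 m = Q0 imin := by
      intro m hm
      rcases htwo m with h | h
      swap
      · exact h
      -- second-order violation: two coordinates both equal to the max value
      exfalso
      set a := Q0 imax with hadef
      set ε : ℝ := min (min (1 - a) (a - p0 lam r c)) a with hεdef
      have ha0 : 0 < a := (hQrange imax).1
      have ha1 : a < 1 := (hQrange imax).2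
      have hε : 0 < ε := by
        apply lt_min (lt_min (by linarith) (by linarith [hpair.2])) ha0
      set F : ℝ → ℝ :=
        fun t => (∑ m', w (Q0 m')) - w (Q0 imax) - w (Q0 m) + w (Q0 imax + t) + w (Q0 m - t)
        with hFdef
      have hFmono : StrictMonoOn F (Set.Icc 0 (ε/2)) := by
        apply strictMonoOn_of_deriv_pos (convex_Icc _ _)
        · apply Continuous.continuousOn
          exact (continuous_const.add (hw_cont.comp (continuous_const.add continuous_id))).add
            (hw_cont.comp (continuous_const.sub continuous_id))
        · intro s hs
          rw [interior_Icc] at hs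
          have hs0 : 0 < s := hs.1
          have hsε : s < ε/2 := hs.2
          have hain : Q0 imax + s ∈ Set.Ioo (0:ℝ) 1 := by
            constructor
            · linarith
            · have : s < 1 - a := by
                have h1 : ε ≤ 1 - a := le_trans (min_le_left _ _) (min_le_left _ _)
                linarith
              linarith
          have hmin2 : Q0 m - s ∈ Set.Ioo (0:ℝ) 1 := by
            rw [h]
            constructor
            · have h1 : ε ≤ a := min_le_right _ _
              linarith
            · linarith
          rw [(hFderiv imax m s hain hmin2).deriv]
          have hgm : gfun lam r c (Q0 m - s) < gfun lam r c (Q0 imax + s) := by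
            rw [h] at hmin2 ⊢
            apply g_mono hc hr hA hlamc hmin2.1 (by linarith) hain.2
            have h1 : ε ≤ a - p0 lam r c := le_trans (min_le_left _ _) (min_le_right _ _)
            linarith
          have hdw : ∀ p : ℝ, dw k lam r c p = gfun lam r c p + (lam - r)*(1+Real.log k) := by
            intro p
            unfold dw gfun
            ring
          rw [hdw, hdw]
          linarith
      have hlt : F 0 < F (ε/2) := by
        apply hFmono (Set.left_mem_Icc.mpr (by linarith)) (Set.right_mem_Icc.mpr (by linarith))
        linarith
      have hF0 : F 0 = ∑ m', w (Q0 m') := by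
        rw [hFdef]
        simp only [add_zero, sub_zero]
        ring
      have hmem' : pert Q0 imax m (ε/2) ∈ stdSimplex ℝ (Fin k) := by
        apply pert_mem (fun hcon => hm hcon.symm) hQ0mem
        · linarith
        · rw [h]
          have h1 : ε ≤ a := min_le_right _ _
          linarith
      have h2 := hmax _ hmem'
      rw [sum_pert_w w (fun hcon => hm hcon.symm)] at h2
      rw [hF0] at hlt
      rw [hFdef] at hlt
      simp only at hlt
      linarith [h2, hlt]
    -- conclude: two-valued with unique max
    have hbval : Q0 imin = (1 - Q0 imax)/((k:ℝ)-1) := by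
      have h1 := sum_two_val hk Q0 imax (Q0 imax) (Q0 imin) rfl huniq
      rw [hQ0mem.2] at h1
      field_simp
      linarith
    have ha1k : 1/(k:ℝ) < Q0 imax := by
      have h1 := sum_two_val hk Q0 imax (Q0 imax) (Q0 imin) rfl huniq
      rw [hQ0mem.2] at h1
      rw [div_lt_iff₀ hkpos]
      nlinarith [hba, hk1]
    exact hGtwo imax (Q0 imax) ⟨ha1k, le_of_lt (hQrange imax).2⟩ rfl
      (fun j hj => by rw [huniq j hj, hbval])
lemma main_ineq (hk : 2 ≤ k) {lam : ℝ} (hlam : lam ∈ Set.Icc (-(1 / ((k : ℝ) - 1))) 1)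
    {P : Fin k → ℝ} (hP : P ∈ stdSimplex ℝ (Fin k)) :
    klUnif k (pottsChannel k lam P) ≤ rstar k lam * klUnif k P := by
  have hkpos := kR_pos hk
  have hk1 := kR1_pos hk
  by_cases hl0 : lam = 0
  · subst hl0
    have hL : klUnif k (pottsChannel k 0 P) = 0 := by
      rw [klUnif_eq_sum_phi hk]
      have hpt : ∀ m : Fin k, phi k (pottsChannel k 0 P m) = 0 := by
        intro m
        have he : pottsChannel k 0 P m = 1/(k:ℝ) := by
          unfold pottsChannel
          norm_num
        rw [he, phi_inv_k hk]
      rw [Finset.sum_congr rfl (fun m _ => hpt m)]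
      simp
    rw [hL]
    exact mul_nonneg (rstar_nonneg hk hlam) (klUnif_nonneg hk hP)
  by_cases hl1 : lam = 1
  · subst hl1
    have hL : pottsChannel k 1 P = P := by
      funext y
      unfold pottsChannel
      norm_num
    rw [hL]
    have hklt : (1:ℝ) < (k:ℝ) := by exact_mod_cast (by omega : 1 < k)
    have hpos1 : 0 < psi k 1 := by
      rw [psi_one hk]
      exact Real.log_pos hklt
    have hr1 : 1 ≤ rstar k 1 := by
      have hmem : psi k (1 * 1 + (1-1)/(k:ℝ)) / psi k 1 ∈ Bset k 1 :=
        ⟨1, ⟨inv_k_lt_one hk, le_refl 1⟩, rfl⟩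
      have harg : (1:ℝ) * 1 + (1-1)/(k:ℝ) = 1 := by norm_num
      have he : psi k (1 * 1 + (1-1)/(k:ℝ)) / psi k 1 = 1 := by
        rw [harg]
        exact div_self (ne_of_gt hpos1)
      have h2 := mem_le_rstar hk hlam hmem
      rwa [he] at h2
    exact le_mul_of_one_le_left (klUnif_nonneg hk hP) hr1
  have hlt1 : lam < 1 := lt_of_le_of_ne hlam.2 hl1
  have hc : 0 < (1-lam)/(k:ℝ) := div_pos (by linarith) hkpos
  have hr := rstar_pos hk hlam hl0
  have hA : 0 ≤ lam * (lam - rstar k lam) := by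
    rcases lt_or_gt_of_ne hl0 with h | h
    · have h2 : lam - rstar k lam < 0 := by linarith
      exact le_of_lt (mul_pos_of_neg_of_neg h h2)
    · have h2 := rstar_le_lam hk (le_of_lt h) hlam.2
      exact mul_nonneg (le_of_lt h) (by linarith)
  have hlamc : ∀ q : ℝ, 0 < q → q < 1 → 0 < lam*q + (1-lam)/(k:ℝ) := by
    intro q hq0 hq1
    rcases le_or_gt 0 lam with hs | hs
    · nlinarith
    · have h1 : lam * 1 < lam * q := mul_lt_mul_of_neg_left hq1 hs
      have h2 : 0 ≤ (1-lam)/(k:ℝ) + lam := (weights_nonneg hk hlam).2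
      linarith
  have hB : ∀ x : ℝ, x ∈ Set.Ioc (1/(k:ℝ)) 1 →
      psi k (lam*x + (1-lam)/(k:ℝ)) ≤ rstar k lam * psi k x := by
    intro x hx
    obtain ⟨hxI, hxne⟩ := Ioc_sub hk hx
    have hmem : psi k (lam*x + (1-lam)/(k:ℝ))/psi k x ∈ Bset k lam := ⟨x, hx, rfl⟩
    have h2 := mem_le_rstar hk hlam hmem
    rwa [div_le_iff₀ (psi_pos hk hxI hxne)] at h2
  exact main_core hk hr hc hA hlamc hB hP

end PottsAux

open PottsAux in
/-- The input-restricted KL contraction coefficient of the Potts channel at the uniform input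
equals `sup_{x∈(1/k,1]} ψ(λx + (1−λ)/k)/ψ(x)`. -/
theorem potts_eta_KL_uniform (k : ℕ) (hk : 2 ≤ k)
    (lam : ℝ) (hlam : lam ∈ Set.Icc (-(1 / ((k : ℝ) - 1))) 1) :
    sSup {r : ℝ | ∃ P : Fin k → ℝ, (∀ i, 0 ≤ P i) ∧ (∑ i, P i = 1) ∧
        P ≠ (fun _ => 1 / (k : ℝ)) ∧
        r = klUnif k (pottsChannel k lam P) / klUnif k P}
      = sSup {r : ℝ | ∃ x ∈ Set.Ioc (1 / (k : ℝ)) 1,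
          r = psi k (lam * x + (1 - lam) / (k : ℝ)) / psi k x} := by
  have hBeq : {r : ℝ | ∃ x ∈ Set.Ioc (1 / (k : ℝ)) 1,
      r = psi k (lam * x + (1 - lam) / (k : ℝ)) / psi k x} = Bset k lam := rfl
  rw [hBeq]
  set Aset := {r : ℝ | ∃ P : Fin k → ℝ, (∀ i, 0 ≤ P i) ∧ (∑ i, P i = 1) ∧
      P ≠ (fun _ => 1 / (k : ℝ)) ∧
      r = klUnif k (pottsChannel k lam P) / klUnif k P} with hAdef
  have hsubset : Bset k lam ⊆ Aset := by
    rintro r ⟨x, hx, rfl⟩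
    obtain ⟨hxI, hxne⟩ := Ioc_sub hk hx
    have hmem := qdist_mem hk hxI
    refine ⟨qdist k x, hmem.1, hmem.2, qdist_ne_unif hk hxne, ?_⟩
    rw [potts_qdist hk, klUnif_qdist hk, klUnif_qdist hk]
  have hub : ∀ a ∈ Aset, a ≤ rstar k lam := by
    rintro a ⟨P, hP1, hP2, hPne, rfl⟩
    have hPmem : P ∈ stdSimplex ℝ (Fin k) := ⟨hP1, hP2⟩
    have hD := klUnif_pos hk hPmem hPne
    rw [div_le_iff₀ hD]
    exact main_ineq hk hlam hPmem
  have hAne : Aset.Nonempty := (B_nonempty hk lam).mono hsubset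
  apply le_antisymm
  · exact csSup_le hAne hub
  · exact csSup_le_csSup ⟨rstar k lam, hub⟩ (B_nonempty hk lam) hsubset
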